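/- In the two-patch setting, let α₁, α₂, β : [0,1] → ℝ be continuous with α₁(ξ)·α₂(ξ) > 0 for all ξ ∈ [0,1] and α₁(ξ)∂₂F⁽²⁾(ξ,0) + α₂(ξ)∂₁F⁽¹⁾(0,ξ) + β(ξ)∂₂F⁽¹⁾(0,ξ) = 0 for all ξ ∈ [0,1]. Let f⁽¹⁾, f⁽²⁾ : [0,1]² → ℝ be C¹ on [0,1]² with f⁽¹⁾(0,ξ) = f⁽²⁾(ξ,0) for all ξ ∈ [0,1], and let φ : F⁽¹⁾([0,1]²) ∪ F⁽²⁾([0,1]²) → ℝ be the unique function with φ ∘ F⁽ⁱ⁾ = f⁽ⁱ⁾ for i = 1, 2. Then φ is continuously differentiable on Ω if and only if α₁(ξ)∂₂f⁽²⁾(ξ,0) + α₂(ξ)∂₁f⁽¹⁾(0,ξ) + β(ξ)∂₂f⁽¹⁾(0,ξ) = 0 for all ξ ∈ [0,1]. -/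

import Mathlib

/-- The determinant of the 2×2 matrix with columns `a` and `b`. -/
def det2 (a b : ℝ × ℝ) : ℝ := a.1 * b.2 - a.2 * b.1

/-- Partial derivative with respect to the first argument. -/
noncomputable def pd1 {E : Type*} [NormedAddCommGroup E] [NormedSpace ℝ E]
    (f : ℝ × ℝ → E) (x : ℝ × ℝ) : E := deriv (fun s => f (s, x.2)) x.1

/-- Partial derivative with respect to the second argument. -/
noncomputable def pd2 {E : Type*} [NormedAddCommGroup E] [NormedSpace ℝ E]
    (f : ℝ × ℝ → E) (x : ℝ × ℝ) : E := deriv (fun s => f (x.1, s)) x.2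

/-- The unit square `[0,1]²` in `ℝ²`. -/
def square : Set (ℝ × ℝ) := Set.Icc (0:ℝ) 1 ×ˢ Set.Icc (0:ℝ) 1

open Set Filter Topology Asymptotics ContinuousLinearMap

noncomputable section

lemma pd1_eq {E : Type*} [NormedAddCommGroup E] [NormedSpace ℝ E]
    {f : ℝ × ℝ → E} {x : ℝ × ℝ} (h : DifferentiableAt ℝ f x) :
    pd1 f x = fderiv ℝ f x (1, 0) := by
  have h1 : HasDerivAt (fun s : ℝ => (s, x.2)) ((1:ℝ), (0:ℝ)) x.1 := by
    simpa using ((hasDerivAt_id x.1).prodMk (hasDerivAt_const x.1 x.2))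
  have h2 : HasDerivAt (fun s => f (s, x.2)) (fderiv ℝ f x ((1:ℝ),(0:ℝ))) x.1 := by
    have := (h.hasFDerivAt.comp_hasDerivAt x.1 (by simpa using h1))
    simpa [Function.comp_def] using this
  exact h2.deriv

lemma pd2_eq {E : Type*} [NormedAddCommGroup E] [NormedSpace ℝ E]
    {f : ℝ × ℝ → E} {x : ℝ × ℝ} (h : DifferentiableAt ℝ f x) :
    pd2 f x = fderiv ℝ f x (0, 1) := by
  have h1 : HasDerivAt (fun s : ℝ => (x.1, s)) ((0:ℝ), (1:ℝ)) x.2 := by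
    simpa using ((hasDerivAt_const x.2 x.1).prodMk (hasDerivAt_id x.2))
  have h2 : HasDerivAt (fun s => f (x.1, s)) (fderiv ℝ f x ((0:ℝ),(1:ℝ))) x.2 := by
    have := (h.hasFDerivAt.comp_hasDerivAt x.2 (by simpa using h1))
    simpa [Function.comp_def] using this
  exact h2.deriv

lemma clm_apply_eq {E : Type*} [NormedAddCommGroup E] [NormedSpace ℝ E]
    (L : ℝ × ℝ →L[ℝ] E) (v : ℝ × ℝ) :
    L v = v.1 • L (1, 0) + v.2 • L (0, 1) := by
  have hv : v = v.1 • ((1:ℝ), (0:ℝ)) + v.2 • ((0:ℝ), (1:ℝ)) := by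
    ext <;> simp
  conv_lhs => rw [hv]
  rw [map_add, map_smul, map_smul]

/-- basis continuous linear maps -/
def E11 : ℝ × ℝ →L[ℝ] ℝ × ℝ := (ContinuousLinearMap.fst ℝ ℝ ℝ).prod 0
def E12 : ℝ × ℝ →L[ℝ] ℝ × ℝ := (ContinuousLinearMap.snd ℝ ℝ ℝ).prod 0
def E21 : ℝ × ℝ →L[ℝ] ℝ × ℝ := ContinuousLinearMap.prod 0 (ContinuousLinearMap.fst ℝ ℝ ℝ)
def E22 : ℝ × ℝ →L[ℝ] ℝ × ℝ := ContinuousLinearMap.prod 0 (ContinuousLinearMap.snd ℝ ℝ ℝ)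

/-- Explicit inverse of a 2×2 continuous linear map. -/
def clmInv (L : ℝ × ℝ →L[ℝ] ℝ × ℝ) : ℝ × ℝ →L[ℝ] ℝ × ℝ :=
  (det2 (L (1,0)) (L (0,1)))⁻¹ •
    ((L (0,1)).2 • E11 - (L (0,1)).1 • E12 - (L (1,0)).2 • E21 + (L (1,0)).1 • E22)

lemma clmInv_apply (L : ℝ × ℝ →L[ℝ] ℝ × ℝ) (v : ℝ × ℝ) :
    clmInv L v = (det2 (L (1,0)) (L (0,1)))⁻¹ •
      ((L (0,1)).2 * v.1 - (L (0,1)).1 * v.2, (L (1,0)).1 * v.2 - (L (1,0)).2 * v.1) := by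
  simp [clmInv, E11, E12, E21, E22, Prod.ext_iff, smul_eq_mul]
  all_goals ring

lemma clmInv_left {L : ℝ × ℝ →L[ℝ] ℝ × ℝ} (hd : det2 (L (1,0)) (L (0,1)) ≠ 0) (v : ℝ × ℝ) :
    clmInv L (L v) = v := by
  rw [clm_apply_eq L v, clmInv_apply]
  unfold det2 at *
  simp only [Prod.smul_mk, Prod.mk_add_mk, smul_eq_mul, Prod.fst_add, Prod.snd_add,
    Prod.smul_fst, Prod.smul_snd] at *
  ext
  · field_simp; ring
  · field_simp; ring

lemma clmInv_right {L : ℝ × ℝ →L[ℝ] ℝ × ℝ} (hd : det2 (L (1,0)) (L (0,1)) ≠ 0) (v : ℝ × ℝ) :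
    L (clmInv L v) = v := by
  have key := clm_apply_eq L (((L (0,1)).2 * v.1 - (L (0,1)).1 * v.2), ((L (1,0)).1 * v.2 - (L (1,0)).2 * v.1))
  rw [clmInv_apply, map_smul, key]
  unfold det2 at *
  ext
  · simp only [Prod.fst_add, Prod.smul_fst, smul_eq_mul]
    field_simp; ring
  · simp only [Prod.snd_add, Prod.smul_snd, smul_eq_mul]
    field_simp; ring

/-- the continuous linear equivalence -/
def clmEquiv (L : ℝ × ℝ →L[ℝ] ℝ × ℝ) (hd : det2 (L (1,0)) (L (0,1)) ≠ 0) : (ℝ × ℝ) ≃L[ℝ] (ℝ × ℝ) :=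
  ContinuousLinearEquiv.equivOfInverse L (clmInv L) (clmInv_left hd) (clmInv_right hd)

@[simp] lemma clmEquiv_coe (L : ℝ × ℝ →L[ℝ] ℝ × ℝ) (hd : det2 (L (1,0)) (L (0,1)) ≠ 0) :
    (clmEquiv L hd : (ℝ × ℝ) →L[ℝ] (ℝ × ℝ)) = L := rfl


lemma isCompact_square : IsCompact square := isCompact_Icc.prod isCompact_Icc

lemma uniqueDiffOn_square : UniqueDiffOn ℝ square :=
  UniqueDiffOn.prod (uniqueDiffOn_Icc zero_lt_one) (uniqueDiffOn_Icc zero_lt_one)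

/-- (inv-cont): preimages of points near `F x` under `F` restricted to the square
are near `x`. -/
lemma preimage_close {F : ℝ × ℝ → ℝ × ℝ} (hFc : ContinuousOn F square)
    (hinj : Set.InjOn F square) {x : ℝ × ℝ} (hx : x ∈ square)
    {N : Set (ℝ × ℝ)} (hN : N ∈ 𝓝 x) :
    ∀ᶠ q in 𝓝 (F x), ∀ y ∈ square, F y = q → y ∈ N := by
  have hKc : IsCompact (F '' (square \ interior N)) :=
    (isCompact_square.diff isOpen_interior).image_of_continuousOn
      (hFc.mono diff_subset)
  have hFxn : F x ∉ F '' (square \ interior N) := by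
    rintro ⟨y, ⟨hy, hyN⟩, hFy⟩
    exact hyN (by rw [hinj hy hx hFy]; exact mem_interior_iff_mem_nhds.2 hN)
  have : (F '' (square \ interior N))ᶜ ∈ 𝓝 (F x) :=
    hKc.isClosed.isOpen_compl.mem_nhds hFxn
  filter_upwards [this] with q hq y hy hFyq
  by_contra hyN
  exact hq ⟨y, ⟨hy, fun h => hyN (interior_subset h)⟩, hFyq⟩

lemma cdo_diffAt {f : ℝ × ℝ → ℝ × ℝ} {U : Set (ℝ × ℝ)} {x : ℝ × ℝ}
    (h : ContDiffOn ℝ 1 f U) (hU : IsOpen U) (hx : x ∈ U) : DifferentiableAt ℝ f x :=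
  ((h.differentiableOn one_ne_zero) x hx).differentiableAt (hU.mem_nhds hx)

lemma cdo_diffAt' {f : ℝ × ℝ → ℝ} {U : Set (ℝ × ℝ)} {x : ℝ × ℝ}
    (h : ContDiffOn ℝ 1 f U) (hU : IsOpen U) (hx : x ∈ U) : DifferentiableAt ℝ f x :=
  ((h.differentiableOn one_ne_zero) x hx).differentiableAt (hU.mem_nhds hx)

lemma cdo_strict {f : ℝ × ℝ → ℝ × ℝ} {U : Set (ℝ × ℝ)} {x : ℝ × ℝ}
    (h : ContDiffOn ℝ 1 f U) (hU : IsOpen U) (hx : x ∈ U) :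
    HasStrictFDerivAt f (fderiv ℝ f x) x :=
  ((h x hx).contDiffAt (hU.mem_nhds hx)).hasStrictFDerivAt one_ne_zero

/-- extensionality for CLMs on `ℝ × ℝ` from values on the basis -/
lemma clm_ext2 {E : Type*} [NormedAddCommGroup E] [NormedSpace ℝ E]
    {L L' : ℝ × ℝ →L[ℝ] E} (h1 : L (1,0) = L' (1,0)) (h2 : L (0,1) = L' (0,1)) :
    L = L' := by
  ext
  · simpa using h1
  · simpa using h2

lemma interface_deriv {E : Type*} [NormedAddCommGroup E] [NormedSpace ℝ E]
    {g1 g2 : ℝ × ℝ → E} {η : ℝ} (hη : η ∈ Icc (0:ℝ) 1)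
    (hd1 : DifferentiableAt ℝ g1 (0,η)) (hd2 : DifferentiableAt ℝ g2 (η,0))
    (hagree : ∀ ξ ∈ Icc (0:ℝ) 1, g1 (0,ξ) = g2 (ξ,0)) :
    pd2 g1 (0,η) = pd1 g2 (η,0) := by
  have i1 : HasDerivAt (fun s : ℝ => ((0:ℝ), s)) ((0:ℝ), (1:ℝ)) η := by
    simpa using ((hasDerivAt_const η (0:ℝ)).prodMk (hasDerivAt_id η))
  have i2 : HasDerivAt (fun s : ℝ => (s, (0:ℝ))) ((1:ℝ), (0:ℝ)) η := by
    simpa using ((hasDerivAt_id η).prodMk (hasDerivAt_const η (0:ℝ)))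
  have h1 : HasDerivAt (fun s => g1 (0,s)) (pd2 g1 (0,η)) η := by
    have := hd1.hasFDerivAt.comp_hasDerivAt η (by simpa using i1)
    rw [pd2_eq hd1]
    simpa [Function.comp_def] using this
  have h2 : HasDerivAt (fun s => g2 (s,0)) (pd1 g2 (η,0)) η := by
    have := hd2.hasFDerivAt.comp_hasDerivAt η (by simpa using i2)
    rw [pd1_eq hd2]
    simpa [Function.comp_def] using this
  have h1' : HasDerivWithinAt (fun s => g2 (s,0)) (pd2 g1 (0,η)) (Icc (0:ℝ) 1) η :=
    (h1.hasDerivWithinAt).congr (fun y hy => (hagree y hy).symm) (hagree η hη).symm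
  exact ((uniqueDiffOn_Icc zero_lt_one) η hη).eq_deriv _ h1' h2.hasDerivWithinAt

/-- Per-patch differentiability estimate: near `F x`, on the image of the square,
`φ` is approximated by the affine map with linear part `L`. -/
lemma arith_key {e C K : ℝ} (he : 0 < e) (hC : 0 ≤ C) (hK : 0 ≤ K) :
    (e / (2*(K+1)) + C * (e / (2*(C+1)*(K+1)))) * K ≤ e := by
  have h1 : e / (2*(K+1)) * K ≤ e / 2 := by
    rw [div_mul_eq_mul_div, div_le_div_iff₀ (by positivity) two_pos]
    nlinarith
  have h2 : C * (e / (2*(C+1)*(K+1))) * K ≤ e / 2 := by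
    rw [show C * (e / (2*(C+1)*(K+1))) * K = (C*e*K) / (2*(C+1)*(K+1)) by ring,
      div_le_div_iff₀ (by positivity) two_pos]
    nlinarith [mul_nonneg he.le hC, mul_nonneg he.le hK, mul_nonneg (mul_nonneg he.le hC) hK]
  calc (e / (2*(K+1)) + C * (e / (2*(C+1)*(K+1)))) * K
      = e / (2*(K+1)) * K + C * (e / (2*(C+1)*(K+1))) * K := by ring
    _ ≤ e/2 + e/2 := add_le_add h1 h2
    _ = e := by ring

lemma patch_est {F : ℝ × ℝ → ℝ × ℝ} {f : ℝ × ℝ → ℝ} {U V : Set (ℝ × ℝ)}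
    (hU : IsOpen U) (hsqU : square ⊆ U) (hF : ContDiffOn ℝ 1 F U)
    (hV : IsOpen V) (hsqV : square ⊆ V) (hf : ContDiffOn ℝ 1 f V)
    (hinj : Set.InjOn F square)
    {x : ℝ × ℝ} (hx : x ∈ square) (hd : det2 (pd1 F x) (pd2 F x) ≠ 0)
    {φ : ℝ × ℝ → ℝ} (hφ : ∀ y ∈ square, φ (F y) = f y)
    {L : ℝ × ℝ →L[ℝ] ℝ} (hL : L.comp (fderiv ℝ F x) = fderiv ℝ f x)
    {ε : ℝ} (hε : 0 < ε) :
    ∀ᶠ q in 𝓝 (F x), q ∈ F '' square → ‖φ q - φ (F x) - L (q - F x)‖ ≤ ε * ‖q - F x‖ := by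
  have hxU := hsqU hx
  have hFd : DifferentiableAt ℝ F x := cdo_diffAt hF hU hxU
  have hfd : DifferentiableAt ℝ f x := cdo_diffAt' hf hV (hsqV hx)
  have hd' : det2 (fderiv ℝ F x (1,0)) (fderiv ℝ F x (0,1)) ≠ 0 := by
    rwa [← pd1_eq hFd, ← pd2_eq hFd]
  have hFs : HasStrictFDerivAt F
      ((clmEquiv (fderiv ℝ F x) hd' : (ℝ×ℝ) ≃L[ℝ] (ℝ×ℝ)) : (ℝ×ℝ) →L[ℝ] (ℝ×ℝ)) x :=
    cdo_strict hF hU hxU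
  obtain ⟨K, T, hT, hgK⟩ := hFs.to_localInverse.exists_lipschitzOnWith
  set g := hFs.localInverse F _ x with hg
  have hgFx : g (F x) = x := hFs.eventually_left_inverse.self_of_nhds
  have hC0 : (0:ℝ) ≤ ‖L‖ := norm_nonneg L
  have hK0 : (0:ℝ) ≤ (K:ℝ) := K.coe_nonneg
  set ε₁ := ε / (2 * ((K:ℝ) + 1)) with hε₁def
  set ε₂ := ε / (2 * (‖L‖ + 1) * ((K:ℝ) + 1)) with hε₂def
  have hε₁ : 0 < ε₁ := by positivity
  have hε₂ : 0 < ε₂ := by positivity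
  have e1 : ∀ᶠ y in 𝓝 x, ‖f y - f x - fderiv ℝ f x (y - x)‖ ≤ ε₁ * ‖y - x‖ :=
    isLittleO_iff.1 hfd.hasFDerivAt.isLittleO hε₁
  have e2 : ∀ᶠ y in 𝓝 x, ‖F y - F x - fderiv ℝ F x (y - x)‖ ≤ ε₂ * ‖y - x‖ :=
    isLittleO_iff.1 hFd.hasFDerivAt.isLittleO hε₂
  have e3 : ∀ᶠ y in 𝓝 x, g (F y) = y := hFs.eventually_left_inverse
  have e4 : ∀ᶠ y in 𝓝 x, F y ∈ T := hFd.continuousAt.preimage_mem_nhds hT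
  have hN := (e1.and (e2.and (e3.and e4)))
  have main := preimage_close (hF.continuousOn.mono hsqU) hinj hx hN
  have hTx : F x ∈ T := mem_of_mem_nhds hT
  filter_upwards [main] with q hq hqim
  obtain ⟨y, hy, rfl⟩ := hqim
  obtain ⟨hy1, hy2, hy3, hy4⟩ := hq y hy rfl
  have hdist : ‖y - x‖ ≤ (K:ℝ) * ‖F y - F x‖ := by
    have := hgK.dist_le_mul (F y) hy4 (F x) hTx
    rwa [dist_eq_norm, dist_eq_norm, hy3, hgFx] at this
  rw [hφ y hy, hφ x hx]
  have hLDF : fderiv ℝ f x (y - x) = L (fderiv ℝ F x (y - x)) := by rw [← hL]; rfl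
  have step1 : f y - f x - L (F y - F x)
      = (f y - f x - fderiv ℝ f x (y - x)) + L (fderiv ℝ F x (y - x) - (F y - F x)) := by
    simp only [map_sub, hLDF]; ring
  rw [step1]
  have b1 : ‖L (fderiv ℝ F x (y - x) - (F y - F x))‖ ≤ ‖L‖ * (ε₂ * ‖y - x‖) := by
    refine le_trans (L.le_opNorm _) ?_
    have : ‖fderiv ℝ F x (y - x) - (F y - F x)‖ ≤ ε₂ * ‖y - x‖ := by
      rw [norm_sub_rev]; exact hy2
    exact mul_le_mul_of_nonneg_left this hC0
  have hn2 : (0:ℝ) ≤ ‖F y - F x‖ := norm_nonneg _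
  have hkey : (ε₁ + ‖L‖ * ε₂) * (K:ℝ) ≤ ε := by
    rw [hε₁def, hε₂def]
    exact arith_key hε hC0 hK0
  calc ‖(f y - f x - fderiv ℝ f x (y - x)) + L (fderiv ℝ F x (y - x) - (F y - F x))‖
      ≤ ‖f y - f x - fderiv ℝ f x (y - x)‖ + ‖L (fderiv ℝ F x (y - x) - (F y - F x))‖ :=
        norm_add_le _ _
    _ ≤ ε₁ * ‖y - x‖ + ‖L‖ * (ε₂ * ‖y - x‖) := add_le_add hy1 b1
    _ = (ε₁ + ‖L‖ * ε₂) * ‖y - x‖ := by ring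
    _ ≤ (ε₁ + ‖L‖ * ε₂) * ((K:ℝ) * ‖F y - F x‖) := by
        refine mul_le_mul_of_nonneg_left hdist (by positivity)
    _ = ((ε₁ + ‖L‖ * ε₂) * (K:ℝ)) * ‖F y - F x‖ := by ring
    _ ≤ ε * ‖F y - F x‖ := mul_le_mul_of_nonneg_right hkey hn2

/-- If `F x` is interior to the image of the square, then `x` is interior to the square. -/
lemma interior_preimage {F : ℝ × ℝ → ℝ × ℝ} {U : Set (ℝ × ℝ)} (hU : IsOpen U)
    (hsqU : square ⊆ U) (hF : ContDiffOn ℝ 1 F U) (hinj : Set.InjOn F square)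
    {x : ℝ × ℝ} (hx : x ∈ square) (hd : det2 (pd1 F x) (pd2 F x) ≠ 0)
    (hint : F x ∈ interior (F '' square)) : x ∈ interior square := by
  have hFd : DifferentiableAt ℝ F x := cdo_diffAt hF hU (hsqU hx)
  have hd' : det2 (fderiv ℝ F x (1,0)) (fderiv ℝ F x (0,1)) ≠ 0 := by
    rwa [← pd1_eq hFd, ← pd2_eq hFd]
  have hFs : HasStrictFDerivAt F
      ((clmEquiv (fderiv ℝ F x) hd' : (ℝ×ℝ) ≃L[ℝ] (ℝ×ℝ)) : (ℝ×ℝ) →L[ℝ] (ℝ×ℝ)) x :=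
    cdo_strict hF hU (hsqU hx)
  set Φ := hFs.toOpenPartialHomeomorph F with hΦ
  have hxsrc : x ∈ Φ.source := hFs.mem_toOpenPartialHomeomorph_source
  have hsrc : Φ.source ∈ 𝓝 x := Φ.open_source.mem_nhds hxsrc
  have hpc : {q | ∀ y ∈ square, F y = q → y ∈ Φ.source} ∈ 𝓝 (F x) :=
    preimage_close (hF.continuousOn.mono hsqU) hinj hx hsrc
  have hW : F ⁻¹' ({q | ∀ y ∈ square, F y = q → y ∈ Φ.source} ∩ interior (F '' square))
      ∩ Φ.source ∈ 𝓝 x :=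
    Filter.inter_mem (hFd.continuousAt.preimage_mem_nhds
      (Filter.inter_mem hpc (isOpen_interior.mem_nhds hint))) hsrc
  refine mem_interior_iff_mem_nhds.2 (Filter.mem_of_superset hW ?_)
  rintro w ⟨⟨hw1, hw2⟩, hwsrc⟩
  obtain ⟨z, hz, hzw⟩ := interior_subset hw2
  have hzsrc : z ∈ Φ.source := hw1 z hz hzw
  have hinjΦ : Set.InjOn F Φ.source := by
    have := Φ.injOn
    rwa [hΦ, hFs.toOpenPartialHomeomorph_coe] at this
  rwa [← hinjΦ hzsrc hwsrc hzw]

lemma solve_glue {E : Type*} [NormedAddCommGroup E] [NormedSpace ℝ E]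
    {a1 a2 b : ℝ} (ha : a1 ≠ 0) {x y z : E}
    (h : a1 • x + a2 • y + b • z = 0) :
    x = (-(a2/a1)) • y + (-(b/a1)) • z := by
  have e1 : a1 • x = -(a2 • y) - b • z := by
    calc a1 • x = (a1 • x + a2 • y + b • z) - a2 • y - b • z := by abel
    _ = -(a2 • y) - b • z := by rw [h]; abel
  have e2 : x = a1⁻¹ • (a1 • x) := by rw [smul_smul, inv_mul_cancel₀ ha, one_smul]
  rw [e2, e1]
  match_scalars <;> field_simp

/-- Two-patch characterization of `C¹` isogeometric functions: with gluing data
`α₁, α₂, β` satisfying the sign condition and the geometric gluing identity, an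
isogeometric function `φ` (with pullbacks `f⁽¹⁾, f⁽²⁾` agreeing on the interface)
is continuously differentiable on `Ω` iff the gluing condition holds for the
pullbacks. -/
theorem stmt4
    (F1 F2 : ℝ × ℝ → ℝ × ℝ) (U1 U2 : Set (ℝ × ℝ))
    (hU1 : IsOpen U1) (hU2 : IsOpen U2) (hsqU1 : square ⊆ U1) (hsqU2 : square ⊆ U2)
    (hF1 : ContDiffOn ℝ 1 F1 U1) (hF2 : ContDiffOn ℝ 1 F2 U2)
    (hinj1 : Set.InjOn F1 square) (hinj2 : Set.InjOn F2 square)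
    (hjac1 : ∀ x ∈ square, 0 < det2 (pd1 F1 x) (pd2 F1 x))
    (hjac2 : ∀ x ∈ square, 0 < det2 (pd1 F2 x) (pd2 F2 x))
    (hcompat : ∀ ξ ∈ Set.Icc (0:ℝ) 1, F1 (0, ξ) = F2 (ξ, 0))
    (hinter : F1 '' square ∩ F2 '' square = F1 '' (({0} : Set ℝ) ×ˢ Set.Icc (0:ℝ) 1))
    (Ω : Set (ℝ × ℝ)) (hΩ : Ω = interior (F1 '' square ∪ F2 '' square))
    (hΩedge : ∀ ξ ∈ Set.Ioo (0:ℝ) 1, F1 (0, ξ) ∈ Ω)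
    (α₁ α₂ β : ℝ → ℝ)
    (hα₁ : ContinuousOn α₁ (Set.Icc 0 1)) (hα₂ : ContinuousOn α₂ (Set.Icc 0 1))
    (hβc : ContinuousOn β (Set.Icc 0 1))
    (hsign : ∀ ξ ∈ Set.Icc (0:ℝ) 1, 0 < α₁ ξ * α₂ ξ)
    (hglueF : ∀ ξ ∈ Set.Icc (0:ℝ) 1,
      α₁ ξ • pd2 F2 (ξ, 0) + α₂ ξ • pd1 F1 (0, ξ) + β ξ • pd2 F1 (0, ξ) = 0)
    (f1 f2 : ℝ × ℝ → ℝ) (V1 V2 : Set (ℝ × ℝ))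
    (hV1 : IsOpen V1) (hV2 : IsOpen V2) (hsqV1 : square ⊆ V1) (hsqV2 : square ⊆ V2)
    (hf1 : ContDiffOn ℝ 1 f1 V1) (hf2 : ContDiffOn ℝ 1 f2 V2)
    (htrace : ∀ ξ ∈ Set.Icc (0:ℝ) 1, f1 (0, ξ) = f2 (ξ, 0))
    (φ : ℝ × ℝ → ℝ)
    (hφ1 : ∀ x ∈ square, φ (F1 x) = f1 x) (hφ2 : ∀ x ∈ square, φ (F2 x) = f2 x) :
    ContDiffOn ℝ 1 φ Ω ↔
      ∀ ξ ∈ Set.Icc (0:ℝ) 1,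
        α₁ ξ * pd2 f2 (ξ, 0) + α₂ ξ * pd1 f1 (0, ξ) + β ξ * pd2 f1 (0, ξ) = 0 := by
  have hΩopen : IsOpen Ω := by rw [hΩ]; exact isOpen_interior
  have hΩsub : Ω ⊆ F1 '' square ∪ F2 '' square := by rw [hΩ]; exact interior_subset
  have hS1cpt : IsCompact (F1 '' square) :=
    isCompact_square.image_of_continuousOn (hF1.continuousOn.mono hsqU1)
  have hS2cpt : IsCompact (F2 '' square) :=
    isCompact_square.image_of_continuousOn (hF2.continuousOn.mono hsqU2)
  have hmemsq1 : ∀ {η : ℝ}, η ∈ Icc (0:ℝ) 1 → ((0:ℝ), η) ∈ square := fun hη =>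
    Set.mem_prod.2 ⟨left_mem_Icc.2 zero_le_one, hη⟩
  have hmemsq2 : ∀ {η : ℝ}, η ∈ Icc (0:ℝ) 1 → (η, (0:ℝ)) ∈ square := fun hη =>
    Set.mem_prod.2 ⟨hη, left_mem_Icc.2 zero_le_one⟩
  have hdF1 : ∀ y ∈ square, DifferentiableAt ℝ F1 y := fun y hy => cdo_diffAt hF1 hU1 (hsqU1 hy)
  have hdF2 : ∀ y ∈ square, DifferentiableAt ℝ F2 y := fun y hy => cdo_diffAt hF2 hU2 (hsqU2 hy)
  have hdf1 : ∀ y ∈ square, DifferentiableAt ℝ f1 y := fun y hy => cdo_diffAt' hf1 hV1 (hsqV1 hy)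
  have hdf2 : ∀ y ∈ square, DifferentiableAt ℝ f2 y := fun y hy => cdo_diffAt' hf2 hV2 (hsqV2 hy)
  have hdet1 : ∀ y ∈ square, det2 (fderiv ℝ F1 y (1,0)) (fderiv ℝ F1 y (0,1)) ≠ 0 := fun y hy => by
    rw [← pd1_eq (hdF1 y hy), ← pd2_eq (hdF1 y hy)]; exact (hjac1 y hy).ne'
  have hdet2 : ∀ y ∈ square, det2 (fderiv ℝ F2 y (1,0)) (fderiv ℝ F2 y (0,1)) ≠ 0 := fun y hy => by
    rw [← pd1_eq (hdF2 y hy), ← pd2_eq (hdF2 y hy)]; exact (hjac2 y hy).ne'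
  have hα1 : ∀ ξ ∈ Icc (0:ℝ) 1, α₁ ξ ≠ 0 := fun ξ hξ h => by
    have := hsign ξ hξ; rw [h, zero_mul] at this; exact lt_irrefl 0 this
  have hα2 : ∀ ξ ∈ Icc (0:ℝ) 1, α₂ ξ ≠ 0 := fun ξ hξ h => by
    have := hsign ξ hξ; rw [h, mul_zero] at this; exact lt_irrefl 0 this
  have hFint : ∀ η ∈ Icc (0:ℝ) 1, pd2 F1 (0,η) = pd1 F2 (η,0) := fun η hη =>
    interface_deriv hη (hdF1 _ (hmemsq1 hη)) (hdF2 _ (hmemsq2 hη)) hcompat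
  have hfint : ∀ η ∈ Icc (0:ℝ) 1, pd2 f1 (0,η) = pd1 f2 (η,0) := fun η hη =>
    interface_deriv hη (hdf1 _ (hmemsq1 hη)) (hdf2 _ (hmemsq2 hη)) htrace
  constructor
  · -- forward direction
    intro hφC1
    have key : ∀ ξ ∈ Ioo (0:ℝ) 1,
        α₁ ξ * pd2 f2 (ξ, 0) + α₂ ξ * pd1 f1 (0, ξ) + β ξ * pd2 f1 (0, ξ) = 0 := by
      intro ξ hξo
      have hξ : ξ ∈ Icc (0:ℝ) 1 := Ioo_subset_Icc_self hξo
      have hx1 : ((0:ℝ), ξ) ∈ square := hmemsq1 hξ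
      have hx2 : (ξ, (0:ℝ)) ∈ square := hmemsq2 hξ
      have hp : F1 (0, ξ) ∈ Ω := hΩedge ξ hξo
      have hφd : DifferentiableAt ℝ φ (F1 (0,ξ)) :=
        ((hφC1.differentiableOn one_ne_zero) _ hp).differentiableAt (hΩopen.mem_nhds hp)
      have chain1 : fderiv ℝ f1 (0,ξ) = (fderiv ℝ φ (F1 (0,ξ))).comp (fderiv ℝ F1 (0,ξ)) := by
        have hc : HasFDerivAt (fun y => φ (F1 y))
            ((fderiv ℝ φ (F1 (0,ξ))).comp (fderiv ℝ F1 (0,ξ))) ((0:ℝ),ξ) :=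
          hφd.hasFDerivAt.comp _ (hdF1 _ hx1).hasFDerivAt
        have h1 : HasFDerivWithinAt f1
            ((fderiv ℝ φ (F1 (0,ξ))).comp (fderiv ℝ F1 (0,ξ))) square ((0:ℝ),ξ) :=
          hc.hasFDerivWithinAt.congr (fun y hy => (hφ1 y hy).symm) (hφ1 _ hx1).symm
        exact (uniqueDiffOn_square _ hx1).eq (hdf1 _ hx1).hasFDerivAt.hasFDerivWithinAt h1
      have chain2 : fderiv ℝ f2 (ξ,0) = (fderiv ℝ φ (F1 (0,ξ))).comp (fderiv ℝ F2 (ξ,0)) := by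
        have hφd2 : HasFDerivAt φ (fderiv ℝ φ (F1 (0,ξ))) (F2 (ξ,0)) := by
          rw [← hcompat ξ hξ]; exact hφd.hasFDerivAt
        have hc : HasFDerivAt (fun y => φ (F2 y))
            ((fderiv ℝ φ (F1 (0,ξ))).comp (fderiv ℝ F2 (ξ,0))) (ξ,(0:ℝ)) :=
          hφd2.comp _ (hdF2 _ hx2).hasFDerivAt
        have h1 : HasFDerivWithinAt f2
            ((fderiv ℝ φ (F1 (0,ξ))).comp (fderiv ℝ F2 (ξ,0))) square (ξ,(0:ℝ)) :=
          hc.hasFDerivWithinAt.congr (fun y hy => (hφ2 y hy).symm) (hφ2 _ hx2).symm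
        exact (uniqueDiffOn_square _ hx2).eq (hdf2 _ hx2).hasFDerivAt.hasFDerivWithinAt h1
      have e1 : pd1 f1 (0,ξ) = fderiv ℝ φ (F1 (0,ξ)) (pd1 F1 (0,ξ)) := by
        rw [pd1_eq (hdf1 _ hx1), pd1_eq (hdF1 _ hx1), chain1]; rfl
      have e2 : pd2 f1 (0,ξ) = fderiv ℝ φ (F1 (0,ξ)) (pd2 F1 (0,ξ)) := by
        rw [pd2_eq (hdf1 _ hx1), pd2_eq (hdF1 _ hx1), chain1]; rfl
      have e3 : pd2 f2 (ξ,0) = fderiv ℝ φ (F1 (0,ξ)) (pd2 F2 (ξ,0)) := by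
        rw [pd2_eq (hdf2 _ hx2), pd2_eq (hdF2 _ hx2), chain2]; rfl
      rw [e1, e2, e3]
      calc α₁ ξ * fderiv ℝ φ (F1 (0,ξ)) (pd2 F2 (ξ,0))
            + α₂ ξ * fderiv ℝ φ (F1 (0,ξ)) (pd1 F1 (0,ξ))
            + β ξ * fderiv ℝ φ (F1 (0,ξ)) (pd2 F1 (0,ξ))
          = fderiv ℝ φ (F1 (0,ξ))
              (α₁ ξ • pd2 F2 (ξ,0) + α₂ ξ • pd1 F1 (0,ξ) + β ξ • pd2 F1 (0,ξ)) := by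
            rw [map_add, map_add, map_smul, map_smul, map_smul]; simp [smul_eq_mul]
        _ = fderiv ℝ φ (F1 (0,ξ)) 0 := by rw [hglueF ξ hξ]
        _ = 0 := map_zero _
    have c1 : ContinuousOn (fun ξ : ℝ => fderiv ℝ f1 ((0:ℝ),ξ)) (Icc 0 1) := by
      apply (hf1.continuousOn_fderiv_of_isOpen hV1 le_rfl).comp
        (Continuous.continuousOn (continuous_const.prodMk continuous_id))
      intro ξ hξ; exact hsqV1 (hmemsq1 hξ)
    have c2 : ContinuousOn (fun ξ : ℝ => fderiv ℝ f2 (ξ,(0:ℝ))) (Icc 0 1) := by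
      apply (hf2.continuousOn_fderiv_of_isOpen hV2 le_rfl).comp
        (Continuous.continuousOn (continuous_id.prodMk continuous_const))
      intro ξ hξ; exact hsqV2 (hmemsq2 hξ)
    have hH : ContinuousOn (fun ξ : ℝ => α₁ ξ * (fderiv ℝ f2 (ξ,(0:ℝ)) ((0:ℝ),(1:ℝ)))
        + α₂ ξ * (fderiv ℝ f1 ((0:ℝ),ξ) ((1:ℝ),(0:ℝ)))
        + β ξ * (fderiv ℝ f1 ((0:ℝ),ξ) ((0:ℝ),(1:ℝ)))) (Icc 0 1) :=
      ((hα₁.mul (c2.clm_apply continuousOn_const)).add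
        (hα₂.mul (c1.clm_apply continuousOn_const))).add
        (hβc.mul (c1.clm_apply continuousOn_const))
    have hEq : EqOn (fun ξ : ℝ => α₁ ξ * pd2 f2 (ξ,0) + α₂ ξ * pd1 f1 (0,ξ) + β ξ * pd2 f1 (0,ξ))
        (fun ξ : ℝ => α₁ ξ * (fderiv ℝ f2 (ξ,(0:ℝ)) ((0:ℝ),(1:ℝ)))
          + α₂ ξ * (fderiv ℝ f1 ((0:ℝ),ξ) ((1:ℝ),(0:ℝ)))
          + β ξ * (fderiv ℝ f1 ((0:ℝ),ξ) ((0:ℝ),(1:ℝ)))) (Icc 0 1) := fun ξ hξ => by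
      simp only
      rw [pd2_eq (hdf2 _ (hmemsq2 hξ)), pd1_eq (hdf1 _ (hmemsq1 hξ)),
        pd2_eq (hdf1 _ (hmemsq1 hξ))]
    have hcont : ContinuousOn
        (fun ξ : ℝ => α₁ ξ * pd2 f2 (ξ,0) + α₂ ξ * pd1 f1 (0,ξ) + β ξ * pd2 f1 (0,ξ))
        (Icc 0 1) := hH.congr hEq
    have hzero : EqOn
        (fun ξ : ℝ => α₁ ξ * pd2 f2 (ξ,0) + α₂ ξ * pd1 f1 (0,ξ) + β ξ * pd2 f1 (0,ξ))
        (fun _ => (0:ℝ)) (Icc 0 1) := by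
      apply Set.EqOn.of_subset_closure (fun x hx => key x hx) hcont continuousOn_const
        Ioo_subset_Icc_self
      rw [closure_Ioo (zero_ne_one)]
    exact fun ξ hξ => hzero hξ
  · -- backward direction
    intro hg
    set G1 : ℝ × ℝ → (ℝ × ℝ →L[ℝ] ℝ) :=
      fun y => (fderiv ℝ f1 y).comp (clmInv (fderiv ℝ F1 y)) with hG1def
    set G2 : ℝ × ℝ → (ℝ × ℝ →L[ℝ] ℝ) :=
      fun y => (fderiv ℝ f2 y).comp (clmInv (fderiv ℝ F2 y)) with hG2def
    have hG1 : ∀ y ∈ square, (G1 y).comp (fderiv ℝ F1 y) = fderiv ℝ f1 y := fun y hy =>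
      ContinuousLinearMap.ext fun v => by
        simp only [hG1def, ContinuousLinearMap.comp_apply]
        rw [clmInv_left (hdet1 y hy)]
    have hG2 : ∀ y ∈ square, (G2 y).comp (fderiv ℝ F2 y) = fderiv ℝ f2 y := fun y hy =>
      ContinuousLinearMap.ext fun v => by
        simp only [hG2def, ContinuousLinearMap.comp_apply]
        rw [clmInv_left (hdet2 y hy)]
    have hG1a : ∀ y ∈ square, G1 y (pd1 F1 y) = pd1 f1 y := fun y hy => by
      rw [pd1_eq (hdF1 y hy), pd1_eq (hdf1 y hy), ← hG1 y hy]; rfl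
    have hG1b : ∀ y ∈ square, G1 y (pd2 F1 y) = pd2 f1 y := fun y hy => by
      rw [pd2_eq (hdF1 y hy), pd2_eq (hdf1 y hy), ← hG1 y hy]; rfl
    have hG2a : ∀ y ∈ square, G2 y (pd1 F2 y) = pd1 f2 y := fun y hy => by
      rw [pd1_eq (hdF2 y hy), pd1_eq (hdf2 y hy), ← hG2 y hy]; rfl
    have hG2b : ∀ y ∈ square, G2 y (pd2 F2 y) = pd2 f2 y := fun y hy => by
      rw [pd2_eq (hdF2 y hy), pd2_eq (hdf2 y hy), ← hG2 y hy]; rfl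
    -- interface algebra
    have hL12 : ∀ η ∈ Icc (0:ℝ) 1,
        (G1 ((0:ℝ),η)).comp (fderiv ℝ F2 (η,(0:ℝ))) = fderiv ℝ f2 (η,(0:ℝ)) := by
      intro η hη
      have hx1 := hmemsq1 hη; have hx2 := hmemsq2 hη
      apply clm_ext2
      · show G1 ((0:ℝ),η) (fderiv ℝ F2 (η,(0:ℝ)) (1,0)) = fderiv ℝ f2 (η,(0:ℝ)) (1,0)
        rw [← pd1_eq (hdF2 _ hx2), ← pd1_eq (hdf2 _ hx2), ← hFint η hη, ← hfint η hη]
        exact hG1b _ hx1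
      · show G1 ((0:ℝ),η) (fderiv ℝ F2 (η,(0:ℝ)) (0,1)) = fderiv ℝ f2 (η,(0:ℝ)) (0,1)
        rw [← pd2_eq (hdF2 _ hx2), ← pd2_eq (hdf2 _ hx2)]
        have eF : pd2 F2 (η,(0:ℝ)) = (-(α₂ η / α₁ η)) • pd1 F1 ((0:ℝ),η)
            + (-(β η / α₁ η)) • pd2 F1 ((0:ℝ),η) :=
          solve_glue (hα1 η hη) (hglueF η hη)
        have ef : pd2 f2 (η,(0:ℝ)) = (-(α₂ η / α₁ η)) • pd1 f1 ((0:ℝ),η)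
            + (-(β η / α₁ η)) • pd2 f1 ((0:ℝ),η) :=
          solve_glue (hα1 η hη) (by simpa [smul_eq_mul] using hg η hη)
        rw [eF, map_add, map_smul, map_smul, hG1a _ hx1, hG1b _ hx1, ef]
    have hL21 : ∀ η ∈ Icc (0:ℝ) 1,
        (G2 (η,(0:ℝ))).comp (fderiv ℝ F1 ((0:ℝ),η)) = fderiv ℝ f1 ((0:ℝ),η) := by
      intro η hη
      have hx1 := hmemsq1 hη; have hx2 := hmemsq2 hη
      have hGpd : G2 (η,(0:ℝ)) (pd2 F1 ((0:ℝ),η)) = pd2 f1 ((0:ℝ),η) := by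
        rw [hFint η hη, hfint η hη]; exact hG2a _ hx2
      apply clm_ext2
      · show G2 (η,(0:ℝ)) (fderiv ℝ F1 ((0:ℝ),η) (1,0)) = fderiv ℝ f1 ((0:ℝ),η) (1,0)
        rw [← pd1_eq (hdF1 _ hx1), ← pd1_eq (hdf1 _ hx1)]
        have hre : α₂ η • pd1 F1 ((0:ℝ),η) + α₁ η • pd2 F2 (η,(0:ℝ))
            + β η • pd2 F1 ((0:ℝ),η) = 0 := by
          calc α₂ η • pd1 F1 ((0:ℝ),η) + α₁ η • pd2 F2 (η,(0:ℝ)) + β η • pd2 F1 ((0:ℝ),η)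
              = α₁ η • pd2 F2 (η,(0:ℝ)) + α₂ η • pd1 F1 ((0:ℝ),η)
                + β η • pd2 F1 ((0:ℝ),η) := by abel
            _ = 0 := hglueF η hη
        have hre' : α₂ η • pd1 f1 ((0:ℝ),η) + α₁ η • pd2 f2 (η,(0:ℝ))
            + β η • pd2 f1 ((0:ℝ),η) = 0 := by
          calc α₂ η • pd1 f1 ((0:ℝ),η) + α₁ η • pd2 f2 (η,(0:ℝ)) + β η • pd2 f1 ((0:ℝ),η)
              = α₁ η • pd2 f2 (η,(0:ℝ)) + α₂ η • pd1 f1 ((0:ℝ),η)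
                + β η • pd2 f1 ((0:ℝ),η) := by abel
            _ = 0 := by simpa [smul_eq_mul] using hg η hη
        have eF := solve_glue (hα2 η hη) hre
        have ef := solve_glue (hα2 η hη) hre'
        rw [eF, map_add, map_smul, map_smul, hG2b _ hx2, hGpd, ef]
      · show G2 (η,(0:ℝ)) (fderiv ℝ F1 ((0:ℝ),η) (0,1)) = fderiv ℝ f1 ((0:ℝ),η) (0,1)
        rw [← pd2_eq (hdF1 _ hx1), ← pd2_eq (hdf1 _ hx1)]; exact hGpd
    -- interface representation
    have hGam : ∀ p, p ∈ F1 '' square → p ∈ F2 '' square →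
        ∃ η ∈ Icc (0:ℝ) 1, F1 ((0:ℝ),η) = p ∧ F2 (η,(0:ℝ)) = p := by
      intro p hp1 hp2
      have : p ∈ F1 '' (({0} : Set ℝ) ×ˢ Icc (0:ℝ) 1) := by rw [← hinter]; exact ⟨hp1, hp2⟩
      obtain ⟨z, hz, hzeq⟩ := this
      obtain ⟨hz1, hz2⟩ := hz
      have hz0 : z = ((0:ℝ), z.2) := by
        ext
        · exact (mem_singleton_iff.1 hz1)
        · rfl
      refine ⟨z.2, hz2, ?_, ?_⟩
      · rw [← hz0]; exact hzeq
      · rw [← hcompat z.2 hz2, ← hz0]; exact hzeq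
    -- per-patch estimates
    have estim1 : ∀ x ∈ square, ∀ (L : ℝ×ℝ →L[ℝ] ℝ), L.comp (fderiv ℝ F1 x) = fderiv ℝ f1 x →
        ∀ ε : ℝ, 0 < ε → ∀ᶠ q in 𝓝 (F1 x), q ∈ F1 '' square →
          ‖φ q - φ (F1 x) - L (q - F1 x)‖ ≤ ε * ‖q - F1 x‖ := by
      intro x hx L hL ε hε
      exact patch_est hU1 hsqU1 hF1 hV1 hsqV1 hf1 hinj1 hx (hjac1 x hx).ne' hφ1 hL hε
    have estim2 : ∀ x ∈ square, ∀ (L : ℝ×ℝ →L[ℝ] ℝ), L.comp (fderiv ℝ F2 x) = fderiv ℝ f2 x →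
        ∀ ε : ℝ, 0 < ε → ∀ᶠ q in 𝓝 (F2 x), q ∈ F2 '' square →
          ‖φ q - φ (F2 x) - L (q - F2 x)‖ ≤ ε * ‖q - F2 x‖ := by
      intro x hx L hL ε hε
      exact patch_est hU2 hsqU2 hF2 hV2 hsqV2 hf2 hinj2 hx (hjac2 x hx).ne' hφ2 hL hε
    -- differentiability at each point of Ω
    have main1 : ∀ p ∈ Ω, ∀ y ∈ square, F1 y = p → HasFDerivAt φ (G1 y) p := by
      intro p hp y hy hyp
      subst hyp
      apply HasFDerivAt.of_isLittleO
      apply isLittleO_iff.2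
      intro c hc
      by_cases hpS2 : F1 y ∈ F2 '' square
      · obtain ⟨η, hη, hx1eq, hx2eq⟩ := hGam _ ⟨y, hy, rfl⟩ hpS2
        have hyx1 : y = ((0:ℝ), η) := hinj1 hy (hmemsq1 hη) hx1eq.symm
        subst hyx1
        have ev1 := estim1 _ (hmemsq1 hη) (G1 ((0:ℝ),η)) (hG1 _ (hmemsq1 hη)) c hc
        have ev2 := estim2 _ (hmemsq2 hη) (G1 ((0:ℝ),η)) (hL12 η hη) c hc
        rw [hx2eq] at ev2
        have ev0 : ∀ᶠ q in 𝓝 (F1 ((0:ℝ),η)), q ∈ Ω := hΩopen.mem_nhds hp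
        filter_upwards [ev0, ev1, ev2] with q h0 h1 h2
        rcases hΩsub h0 with hq1 | hq2
        · exact h1 hq1
        · exact h2 hq2
      · have ev1 := estim1 y hy (G1 y) (hG1 y hy) c hc
        have ev2 : ∀ᶠ q in 𝓝 (F1 y), q ∉ F2 '' square :=
          hS2cpt.isClosed.isOpen_compl.mem_nhds hpS2
        have ev0 : ∀ᶠ q in 𝓝 (F1 y), q ∈ Ω := hΩopen.mem_nhds hp
        filter_upwards [ev0, ev1, ev2] with q h0 h1 h2
        rcases hΩsub h0 with hq1 | hq2
        · exact h1 hq1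
        · exact absurd hq2 h2
    have main2 : ∀ p ∈ Ω, ∀ y ∈ square, F2 y = p → HasFDerivAt φ (G2 y) p := by
      intro p hp y hy hyp
      subst hyp
      apply HasFDerivAt.of_isLittleO
      apply isLittleO_iff.2
      intro c hc
      by_cases hpS1 : F2 y ∈ F1 '' square
      · obtain ⟨η, hη, hx1eq, hx2eq⟩ := hGam _ hpS1 ⟨y, hy, rfl⟩
        have hyx2 : y = (η, (0:ℝ)) := hinj2 hy (hmemsq2 hη) hx2eq.symm
        subst hyx2
        have ev1 := estim1 _ (hmemsq1 hη) (G2 (η,(0:ℝ))) (hL21 η hη) c hc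
        have ev2 := estim2 _ (hmemsq2 hη) (G2 (η,(0:ℝ))) (hG2 _ (hmemsq2 hη)) c hc
        rw [hx1eq] at ev1
        have ev0 : ∀ᶠ q in 𝓝 (F2 (η,(0:ℝ))), q ∈ Ω := hΩopen.mem_nhds hp
        filter_upwards [ev0, ev1, ev2] with q h0 h1 h2
        rcases hΩsub h0 with hq1 | hq2
        · exact h1 hq1
        · exact h2 hq2
      · have ev2 := estim2 y hy (G2 y) (hG2 y hy) c hc
        have ev1 : ∀ᶠ q in 𝓝 (F2 y), q ∉ F1 '' square :=
          hS1cpt.isClosed.isOpen_compl.mem_nhds hpS1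
        have ev0 : ∀ᶠ q in 𝓝 (F2 y), q ∈ Ω := hΩopen.mem_nhds hp
        filter_upwards [ev0, ev1, ev2] with q h0 h1 h2
        rcases hΩsub h0 with hq1 | hq2
        · exact absurd hq1 h1
        · exact h2 hq2
    have hfd1 : ∀ p ∈ Ω, ∀ y ∈ square, F1 y = p → fderiv ℝ φ p = G1 y :=
      fun p hp y hy hyp => (main1 p hp y hy hyp).fderiv
    have hfd2 : ∀ p ∈ Ω, ∀ y ∈ square, F2 y = p → fderiv ℝ φ p = G2 y :=
      fun p hp y hy hyp => (main2 p hp y hy hyp).fderiv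
    -- continuity of G1, G2 on the square
    have hdFc1 : ContinuousOn (fderiv ℝ F1) square :=
      (hF1.continuousOn_fderiv_of_isOpen hU1 le_rfl).mono hsqU1
    have hdFc2 : ContinuousOn (fderiv ℝ F2) square :=
      (hF2.continuousOn_fderiv_of_isOpen hU2 le_rfl).mono hsqU2
    have hdfc1 : ContinuousOn (fderiv ℝ f1) square :=
      (hf1.continuousOn_fderiv_of_isOpen hV1 le_rfl).mono hsqV1
    have hdfc2 : ContinuousOn (fderiv ℝ f2) square :=
      (hf2.continuousOn_fderiv_of_isOpen hV2 le_rfl).mono hsqV2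
    have ha1 : ContinuousOn (fun y => fderiv ℝ F1 y ((1:ℝ),(0:ℝ))) square :=
      hdFc1.clm_apply continuousOn_const
    have hb1 : ContinuousOn (fun y => fderiv ℝ F1 y ((0:ℝ),(1:ℝ))) square :=
      hdFc1.clm_apply continuousOn_const
    have ha2 : ContinuousOn (fun y => fderiv ℝ F2 y ((1:ℝ),(0:ℝ))) square :=
      hdFc2.clm_apply continuousOn_const
    have hb2 : ContinuousOn (fun y => fderiv ℝ F2 y ((0:ℝ),(1:ℝ))) square :=
      hdFc2.clm_apply continuousOn_const
    have hinvc1 : ContinuousOn (fun y => clmInv (fderiv ℝ F1 y)) square := by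
      simp only [clmInv, det2]
      apply ContinuousOn.fun_smul
      · exact ((ha1.fst.mul hb1.snd).sub (ha1.snd.mul hb1.fst)).inv₀ fun y hy => by
          simpa [det2] using hdet1 y hy
      · exact (((hb1.snd.smul continuousOn_const).sub (hb1.fst.smul continuousOn_const)).sub
          (ha1.snd.smul continuousOn_const)).add (ha1.fst.smul continuousOn_const)
    have hinvc2 : ContinuousOn (fun y => clmInv (fderiv ℝ F2 y)) square := by
      simp only [clmInv, det2]
      apply ContinuousOn.fun_smul
      · exact ((ha2.fst.mul hb2.snd).sub (ha2.snd.mul hb2.fst)).inv₀ fun y hy => by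
          simpa [det2] using hdet2 y hy
      · exact (((hb2.snd.smul continuousOn_const).sub (hb2.fst.smul continuousOn_const)).sub
          (ha2.snd.smul continuousOn_const)).add (ha2.fst.smul continuousOn_const)
    have hGc1 : ContinuousOn G1 square := by
      rw [hG1def]; exact hdfc1.clm_comp hinvc1
    have hGc2 : ContinuousOn G2 square := by
      rw [hG2def]; exact hdfc2.clm_comp hinvc2
    -- per-patch continuity of the derivative of φ
    have cont1 : ∀ p ∈ Ω, ∀ x ∈ square, F1 x = p → ∀ ε : ℝ, 0 < ε →
        ∀ᶠ q in 𝓝 p, q ∈ Ω → q ∈ F1 '' square → ‖fderiv ℝ φ q - G1 x‖ < ε := by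
      intro p hp x hx hxp ε hε
      have hcw : ∀ᶠ y in 𝓝 x, y ∈ square → ‖G1 y - G1 x‖ < ε := by
        have h1 : ∀ᶠ y in 𝓝[square] x, dist (G1 y) (G1 x) < ε :=
          (Metric.tendsto_nhds.1 (hGc1 x hx)) ε hε
        rw [eventually_nhdsWithin_iff] at h1
        filter_upwards [h1] with y hy hysq
        rw [← dist_eq_norm]; exact hy hysq
      have hpc := preimage_close (hF1.continuousOn.mono hsqU1) hinj1 hx hcw
      rw [hxp] at hpc
      filter_upwards [hpc] with q hq hqΩ hqS1
      obtain ⟨y, hy, hyq⟩ := hqS1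
      rw [hfd1 q hqΩ y hy hyq]
      exact hq y hy hyq hy
    have cont2 : ∀ p ∈ Ω, ∀ x ∈ square, F2 x = p → ∀ ε : ℝ, 0 < ε →
        ∀ᶠ q in 𝓝 p, q ∈ Ω → q ∈ F2 '' square → ‖fderiv ℝ φ q - G2 x‖ < ε := by
      intro p hp x hx hxp ε hε
      have hcw : ∀ᶠ y in 𝓝 x, y ∈ square → ‖G2 y - G2 x‖ < ε := by
        have h1 : ∀ᶠ y in 𝓝[square] x, dist (G2 y) (G2 x) < ε :=
          (Metric.tendsto_nhds.1 (hGc2 x hx)) ε hε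
        rw [eventually_nhdsWithin_iff] at h1
        filter_upwards [h1] with y hy hysq
        rw [← dist_eq_norm]; exact hy hysq
      have hpc := preimage_close (hF2.continuousOn.mono hsqU2) hinj2 hx hcw
      rw [hxp] at hpc
      filter_upwards [hpc] with q hq hqΩ hqS2
      obtain ⟨y, hy, hyq⟩ := hqS2
      rw [hfd2 q hqΩ y hy hyq]
      exact hq y hy hyq hy
    -- continuity of the derivative
    have hcontfd : ContinuousOn (fderiv ℝ φ) Ω := by
      intro p hp
      have goal : Tendsto (fderiv ℝ φ) (𝓝[Ω] p) (𝓝 (fderiv ℝ φ p)) := by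
        refine Metric.tendsto_nhds.2 fun ε hε => ?_
        by_cases hp1 : p ∈ F1 '' square <;> by_cases hp2 : p ∈ F2 '' square
        · obtain ⟨η, hη, he1, he2⟩ := hGam p hp1 hp2
          have hd1 : fderiv ℝ φ p = G1 ((0:ℝ),η) := hfd1 p hp _ (hmemsq1 hη) he1
          have hd2 : fderiv ℝ φ p = G2 (η,(0:ℝ)) := hfd2 p hp _ (hmemsq2 hη) he2
          have ev1 := cont1 p hp _ (hmemsq1 hη) he1 ε hε
          have ev2 := cont2 p hp _ (hmemsq2 hη) he2 ε hε
          filter_upwards [ev1.filter_mono nhdsWithin_le_nhds,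
            ev2.filter_mono nhdsWithin_le_nhds, self_mem_nhdsWithin] with q h1 h2 hqΩ
          rcases hΩsub hqΩ with hq1 | hq2
          · rw [dist_eq_norm, hd1]; exact h1 hqΩ hq1
          · rw [dist_eq_norm, hd2]; exact h2 hqΩ hq2
        · obtain ⟨x, hx, hxp⟩ := hp1
          have hd1 := hfd1 p hp x hx hxp
          have ev1 := cont1 p hp x hx hxp ε hε
          have ev2 : ∀ᶠ q in 𝓝 p, q ∉ F2 '' square :=
            hS2cpt.isClosed.isOpen_compl.mem_nhds hp2
          filter_upwards [ev1.filter_mono nhdsWithin_le_nhds,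
            ev2.filter_mono nhdsWithin_le_nhds, self_mem_nhdsWithin] with q h1 h2 hqΩ
          rcases hΩsub hqΩ with hq1 | hq2
          · rw [dist_eq_norm, hd1]; exact h1 hqΩ hq1
          · exact absurd hq2 h2
        · obtain ⟨x, hx, hxp⟩ := hp2
          have hd2 := hfd2 p hp x hx hxp
          have ev2 := cont2 p hp x hx hxp ε hε
          have ev1 : ∀ᶠ q in 𝓝 p, q ∉ F1 '' square :=
            hS1cpt.isClosed.isOpen_compl.mem_nhds hp1
          filter_upwards [ev2.filter_mono nhdsWithin_le_nhds,
            ev1.filter_mono nhdsWithin_le_nhds, self_mem_nhdsWithin] with q h2 h1 hqΩ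
          rcases hΩsub hqΩ with hq1 | hq2
          · exact absurd hq1 h1
          · rw [dist_eq_norm, hd2]; exact h2 hqΩ hq2
        · rcases hΩsub hp with h | h
          · exact absurd h hp1
          · exact absurd h hp2
      exact goal
    -- assembly
    have hdiff : DifferentiableOn ℝ φ Ω := by
      intro p hp
      rcases hΩsub hp with h | h
      · obtain ⟨y, hy, hyp⟩ := h
        exact (main1 p hp y hy hyp).differentiableAt.differentiableWithinAt
      · obtain ⟨y, hy, hyp⟩ := h
        exact (main2 p hp y hy hyp).differentiableAt.differentiableWithinAt
    have hfinal : ContDiffOn ℝ (0+1) φ Ω := by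
      rw [contDiffOn_succ_iff_fderiv_of_isOpen hΩopen]
      exact ⟨hdiff, by simp, contDiffOn_zero.2 hcontfd⟩
    simpa using hfinal

end
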